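/- arXiv:1704.02641 — 2 statements merged into one kernel-verified Lean document; each statement's English description precedes it below -/
import Mathlib

section
/- For the scalar linear Gaussian Kalman filter, the innovations sequence is white: for j ≠ k, E[ε_j ε_k] = 0. -/
open MeasureTheory ProbabilityTheory Real
open scoped NNReal ENNReal

lemma gauss_integral_eq (v : ℝ≥0) (hv : v ≠ 0) (g : ℝ → ℝ) :
    ∫ x, g x ∂(gaussianReal 0 v) = ∫ x, gaussianPDFReal 0 v x * g x := by
  rw [gaussianReal_of_var_ne_zero 0 hv]
  have hf : Measurable fun x => (gaussianPDFReal 0 v x).toNNReal :=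
    (measurable_gaussianPDFReal 0 v).real_toNNReal
  have h2 : gaussianPDF 0 v = fun x => ((gaussianPDFReal 0 v x).toNNReal : ℝ≥0∞) := by
    funext x; simp [gaussianPDF, ENNReal.ofReal]
  rw [h2, integral_withDensity_eq_integral_smul hf g]
  refine integral_congr_ae (Filter.Eventually.of_forall fun x => ?_)
  simp [NNReal.smul_def, Real.coe_toNNReal _ (gaussianPDFReal_nonneg 0 v x)]

lemma gauss_pdf_eq (v : ℝ≥0) (x : ℝ) :
    gaussianPDFReal 0 v x = (√(2 * π * v))⁻¹ * rexp (-(2 * (v:ℝ))⁻¹ * x ^ 2) := by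
  rw [gaussianPDFReal]
  rcases eq_or_ne (v : ℝ) 0 with h | h
  · simp [h]
  · congr 1
    rw [sub_zero]
    congr 1
    field_simp
lemma gauss_pdf_even (v : ℝ≥0) (x : ℝ) : gaussianPDFReal 0 v (-x) = gaussianPDFReal 0 v x := by
  simp [gauss_pdf_eq]

lemma gauss_mean (v : ℝ≥0) : ∫ x, x ∂(gaussianReal 0 v) = 0 := by
  rcases eq_or_ne v 0 with rfl | hv
  · simp [gaussianReal_zero_var]
  · rw [gauss_integral_eq v hv]
    have A : MeasurableEmbedding fun x : ℝ => -x :=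
      (Homeomorph.neg ℝ).measurableEmbedding
    have key : ∫ x, gaussianPDFReal 0 v x * x =
        ∫ x, gaussianPDFReal 0 v (-x) * (-x) := by
      conv_lhs => rw [← Measure.map_neg_eq_self (volume : Measure ℝ)]
      rw [A.integral_map]
    have h3 : ∫ x, gaussianPDFReal 0 v x * x = - ∫ x, gaussianPDFReal 0 v x * x := by
      conv_lhs => rw [key]
      simp only [gauss_pdf_even, mul_neg]
      rw [integral_neg]
    linarith

lemma integral_sq_exp {b : ℝ} (hb : 0 < b) :
    ∫ x : ℝ, x ^ 2 * rexp (-b * x ^ 2) = b ^ (-(3:ℝ)/2) * (√π / 2) := by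
  have h1 : ∫ x : ℝ, x ^ 2 * rexp (-b * x ^ 2)
      = 2 * ∫ x in Set.Ioi (0:ℝ), x ^ 2 * rexp (-b * x ^ 2) := by
    rw [← integral_comp_abs (f := fun x => x ^ 2 * rexp (-b * x ^ 2))]
    simp [sq_abs]
  have h2 := integral_rpow_mul_exp_neg_mul_rpow (p := 2) (q := 2) (b := b)
    two_pos (by norm_num) hb
  simp only [rpow_two] at h2
  have hΓ : Real.Gamma ((2 + 1) / 2) = √π / 2 := by
    have : ((2:ℝ) + 1) / 2 = 1/2 + 1 := by norm_num
    rw [this, Real.Gamma_add_one (by norm_num), Real.Gamma_one_half_eq]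
    ring
  rw [h1, h2, hΓ]
  norm_num
  ring

lemma gauss_sq (v : ℝ≥0) : ∫ x, x ^ 2 ∂(gaussianReal 0 v) = v := by
  rcases eq_or_ne v 0 with rfl | hv
  · simp [gaussianReal_zero_var]
  · have hv' : (0:ℝ) < v := by exact_mod_cast pos_iff_ne_zero.mpr hv
    have ht : (0:ℝ) < 2 * v := by linarith
    have hb : (0:ℝ) < (2 * (v:ℝ))⁻¹ := by positivity
    rw [gauss_integral_eq v hv]
    have hfe : ∀ x:ℝ, gaussianPDFReal 0 v x * x ^ 2
        = (√(2 * π * v))⁻¹ * (x ^ 2 * rexp (-(2*(v:ℝ))⁻¹ * x ^ 2)) := by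
      intro x; rw [gauss_pdf_eq]; ring
    simp_rw [hfe]
    rw [integral_const_mul, integral_sq_exp hb]
    have h5 : ((2*(v:ℝ))⁻¹) ^ (-(3:ℝ)/2) = (2*(v:ℝ)) ^ ((3:ℝ)/2) := by
      rw [Real.inv_rpow ht.le, ← Real.rpow_neg ht.le]
      norm_num
    have h6 : √(2 * π * v) = √(2*(v:ℝ)) * √π := by
      rw [← Real.sqrt_mul ht.le]; ring_nf
    have h7 : (2*(v:ℝ)) ^ ((3:ℝ)/2) = (2*(v:ℝ)) * √(2*(v:ℝ)) := by
      rw [Real.sqrt_eq_rpow, ← Real.rpow_one_add' (by positivity) (by norm_num)]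
      norm_num
    rw [h5, h6, h7]
    have hst : √(2*(v:ℝ)) ≠ 0 := by positivity
    have hsp : √π ≠ 0 := by positivity
    field_simp

lemma gauss_memlp (v : ℝ≥0) : MemLp (id : ℝ → ℝ) 2 (gaussianReal 0 v) := by
  rw [memLp_two_iff_integrable_sq aestronglyMeasurable_id]
  rcases eq_or_ne v 0 with rfl | hv
  · rw [gaussianReal_zero_var]
    refine ⟨(measurable_id.pow_const 2).aestronglyMeasurable, ?_⟩
    rw [hasFiniteIntegral_iff_norm, lintegral_dirac' _ (by measurability)]
    simp
  · have hv' : (0:ℝ) < v := by exact_mod_cast pos_iff_ne_zero.mpr hv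
    have hb : (0:ℝ) < (2 * (v:ℝ))⁻¹ := by positivity
    rw [gaussianReal_of_var_ne_zero 0 hv]
    have hf : Measurable fun x => (gaussianPDFReal 0 v x).toNNReal :=
      (measurable_gaussianPDFReal 0 v).real_toNNReal
    have h2 : gaussianPDF 0 v = fun x => ((gaussianPDFReal 0 v x).toNNReal : ℝ≥0∞) := by
      funext x; simp [gaussianPDF, ENNReal.ofReal]
    rw [h2, integrable_withDensity_iff_integrable_smul hf]
    have hint : Integrable (fun x : ℝ => x ^ (2:ℝ) * rexp (-(2*(v:ℝ))⁻¹ * x ^ 2)) :=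
      integrable_rpow_mul_exp_neg_mul_sq hb (by norm_num)
    simp only [rpow_two] at hint
    have := (hint.const_mul ((√(2 * π * v))⁻¹))
    refine this.congr (Filter.Eventually.of_forall fun x => ?_)
    simp only [NNReal.smul_def, smul_eq_mul, Real.coe_toNNReal _ (gaussianPDFReal_nonneg 0 v x), id_eq]
    rw [gauss_pdf_eq]; ring

section Aux
variable {Ω : Type*} [MeasurableSpace Ω] {P : Measure Ω}

lemma aux_memlp {X : Ω → ℝ} (hX : Measurable X) {v : ℝ≥0}
    (hmap : Measure.map X P = gaussianReal 0 v) : MemLp X 2 P := by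
  have h := gauss_memlp v
  rw [← hmap] at h
  exact (memLp_map_measure_iff aestronglyMeasurable_id hX.aemeasurable).1 h

lemma aux_mean {X : Ω → ℝ} (hX : Measurable X) {v : ℝ≥0}
    (hmap : Measure.map X P = gaussianReal 0 v) : ∫ ω, X ω ∂P = 0 := by
  have h2 : ∫ ω, X ω ∂P = ∫ y, y ∂(Measure.map X P) :=
    (integral_map hX.aemeasurable aestronglyMeasurable_id).symm
  rw [h2, hmap, gauss_mean]

lemma aux_sq {X : Ω → ℝ} (hX : Measurable X) {v : ℝ≥0}
    (hmap : Measure.map X P = gaussianReal 0 v) : ∫ ω, X ω ^ 2 ∂P = v := by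
  have h2 : ∫ ω, X ω ^ 2 ∂P = ∫ y, y ^ 2 ∂(Measure.map X P) :=
    (integral_map hX.aemeasurable
      (by exact (measurable_id.pow_const 2).aestronglyMeasurable)).symm
  rw [h2, hmap, gauss_sq]

lemma aux_mul_int {f g : Ω → ℝ} (hf : MemLp f 2 P) (hg : MemLp g 2 P) :
    Integrable (fun ω => f ω * g ω) P := by
  refine Integrable.mono' ((hf.integrable_sq.add hg.integrable_sq).div_const 2)
    (hf.1.mul hg.1) (Filter.Eventually.of_forall fun ω => ?_)
  have h1 := sq_nonneg (|f ω| - |g ω|)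
  have h2 := sq_abs (f ω)
  have h3 := sq_abs (g ω)
  rw [Real.norm_eq_abs, abs_mul]
  simp only [Pi.add_apply]
  nlinarith [abs_nonneg (f ω), abs_nonneg (g ω)]

lemma aux_indep_zero {X Y : Ω → ℝ} (h : ProbabilityTheory.IndepFun X Y P)
    (hX : AEStronglyMeasurable X P) (hY : AEStronglyMeasurable Y P)
    (h0 : ∫ ω, Y ω ∂P = 0) : ∫ ω, X ω * Y ω ∂P = 0 := by
  have := h.integral_mul_eq_mul_integral hX hY
  simp only [Pi.mul_apply] at this
  rw [this, h0, mul_zero]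

end Aux

section Aux2
variable {Ω : Type*} [MeasurableSpace Ω] {P : Measure Ω} [IsProbabilityMeasure P]

lemma aux_comm (F G : Ω → ℝ) : ∫ ω, F ω * G ω ∂P = ∫ ω, G ω * F ω ∂P :=
  integral_congr_ae (Filter.Eventually.of_forall fun ω => mul_comm (F ω) (G ω))

lemma aux_add3 {g1 g2 g3 : Ω → ℝ} (h1 : Integrable g1 P) (h2 : Integrable g2 P)
    (h3 : Integrable g3 P) :
    ∫ ω, (g1 ω + g2 ω + g3 ω) ∂P = ∫ ω, g1 ω ∂P + ∫ ω, g2 ω ∂P + ∫ ω, g3 ω ∂P := by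
  have e1 : Integrable (fun ω => g1 ω + g2 ω) P := h1.add h2
  rw [integral_add e1 h3, integral_add h1 h2]

lemma aux_dot {D A B C : Ω → ℝ} (α β : ℝ) (hD : MemLp D 2 P) (hA : MemLp A 2 P)
    (hB : MemLp B 2 P) (hC : MemLp C 2 P) :
    ∫ ω, D ω * (α * A ω + β * B ω + C ω) ∂P
      = α * ∫ ω, D ω * A ω ∂P + β * ∫ ω, D ω * B ω ∂P + ∫ ω, D ω * C ω ∂P := by
  have h : (fun ω => D ω * (α * A ω + β * B ω + C ω))
      = fun ω => α * (D ω * A ω) + β * (D ω * B ω) + D ω * C ω := by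
    funext ω; ring
  rw [h, aux_add3 ((aux_mul_int hD hA).const_mul α) ((aux_mul_int hD hB).const_mul β)
    (aux_mul_int hD hC), integral_const_mul, integral_const_mul]

lemma aux_sq3 {A B C : Ω → ℝ} (hA : MemLp A 2 P) (hB : MemLp B 2 P) (hC : MemLp C 2 P)
    (hAB : ∫ ω, A ω * B ω ∂P = 0) (hAC : ∫ ω, A ω * C ω ∂P = 0)
    (hBC : ∫ ω, B ω * C ω ∂P = 0) :
    ∫ ω, (A ω + B ω + C ω) ^ 2 ∂P
      = ∫ ω, A ω ^ 2 ∂P + ∫ ω, B ω ^ 2 ∂P + ∫ ω, C ω ^ 2 ∂P := by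
  have h : (fun ω => (A ω + B ω + C ω) ^ 2)
      = fun ω => (A ω ^ 2 + B ω ^ 2 + C ω ^ 2)
          + (2 * (A ω * B ω) + 2 * (A ω * C ω) + 2 * (B ω * C ω)) := by
    funext ω; ring
  have i1 : Integrable (fun ω => A ω ^ 2 + B ω ^ 2 + C ω ^ 2) P :=
    (hA.integrable_sq.add hB.integrable_sq).add hC.integrable_sq
  have i2 : Integrable (fun ω => 2 * (A ω * B ω) + 2 * (A ω * C ω) + 2 * (B ω * C ω)) P :=
    (((aux_mul_int hA hB).const_mul 2).add ((aux_mul_int hA hC).const_mul 2)).add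
      ((aux_mul_int hB hC).const_mul 2)
  rw [h, integral_add i1 i2,
    aux_add3 hA.integrable_sq hB.integrable_sq hC.integrable_sq,
    aux_add3 ((aux_mul_int hA hB).const_mul 2) ((aux_mul_int hA hC).const_mul 2)
      ((aux_mul_int hB hC).const_mul 2),
    integral_const_mul, integral_const_mul, integral_const_mul, hAB, hAC, hBC]
  ring

lemma aux_L {c S r L : ℝ} (hr : 0 ≤ r) (hS : 0 ≤ S)
    (hL : L = S * c / (c ^ 2 * S + r)) : L * (c ^ 2 * S + r) = c * S := by
  rcases eq_or_ne (c ^ 2 * S + r) 0 with h | h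
  · have h1 : c ^ 2 * S = 0 := by nlinarith [sq_nonneg c]
    have h2 : (c * S) ^ 2 = (c ^ 2 * S) * S := by ring
    have h4 : (c * S) ^ 2 = 0 := by rw [h2, h1, zero_mul]
    have h3 : c * S = 0 := (pow_eq_zero_iff (by norm_num : 2 ≠ 0)).1 h4
    rw [h, h3, mul_zero]
  · rw [hL, div_mul_cancel₀ _ h]; ring

end Aux2

section Filtration
open ProbabilityTheory

/-- Index set: w-indices below `kw`, v-indices below `kv`, and the initial state. -/
def KSet (kw kv : ℕ) : Set (ℕ ⊕ (ℕ ⊕ Unit)) :=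
  Sum.elim (fun n => n < kw) (Sum.elim (fun n => n < kv) fun _ => True)

lemma KSet_mono {kw kv kw' kv' : ℕ} (h1 : kw ≤ kw') (h2 : kv ≤ kv') :
    KSet kw kv ⊆ KSet kw' kv' := by
  rintro (n | n | u) hi
  · exact lt_of_lt_of_le (by exact hi) h1
  · exact lt_of_lt_of_le (by exact hi) h2
  · trivial

lemma KSet_inl {n kw kv : ℕ} : (Sum.inl n ∈ KSet kw kv) ↔ n < kw := Iff.rfl
lemma KSet_inrl {n kw kv : ℕ} : (Sum.inr (Sum.inl n) ∈ KSet kw kv) ↔ n < kv := Iff.rfl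
lemma KSet_inrr {kw kv : ℕ} (u : Unit) : Sum.inr (Sum.inr u) ∈ KSet kw kv := trivial

/-- σ-algebra generated by the variables with indices in `KSet kw kv`. -/
def KMF {Ω : Type*} (f : (ℕ ⊕ (ℕ ⊕ Unit)) → Ω → ℝ) (kw kv : ℕ) : MeasurableSpace Ω :=
  ⨆ i ∈ KSet kw kv, MeasurableSpace.comap (f i) Real.measurableSpace

lemma KMF_le {Ω : Type*} [m : MeasurableSpace Ω] {f : (ℕ ⊕ (ℕ ⊕ Unit)) → Ω → ℝ}
    (hfm : ∀ i, Measurable (f i)) (kw kv : ℕ) : KMF f kw kv ≤ m :=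
  iSup₂_le fun i _ => measurable_iff_comap_le.1 (hfm i)

lemma KMF_mono {Ω : Type*} {f : (ℕ ⊕ (ℕ ⊕ Unit)) → Ω → ℝ} {kw kv kw' kv' : ℕ}
    (h1 : kw ≤ kw') (h2 : kv ≤ kv') : KMF f kw kv ≤ KMF f kw' kv' := by
  unfold KMF
  exact iSup₂_le fun i hi =>
    le_biSup (fun i => MeasurableSpace.comap (f i) Real.measurableSpace) (KSet_mono h1 h2 hi)

lemma KMF_meas {Ω : Type*} {f : (ℕ ⊕ (ℕ ⊕ Unit)) → Ω → ℝ} {kw kv : ℕ} {i}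
    (hi : i ∈ KSet kw kv) : Measurable[KMF f kw kv] (f i) := by
  apply measurable_iff_comap_le.2
  unfold KMF
  exact le_biSup (fun i => MeasurableSpace.comap (f i) Real.measurableSpace) hi

lemma KMF_indep {Ω : Type*} [MeasurableSpace Ω] {P : Measure Ω} {f : (ℕ ⊕ (ℕ ⊕ Unit)) → Ω → ℝ}
    (hfm : ∀ i, Measurable (f i))
    (hindep : iIndepFun f P) {kw kv : ℕ} {g : Ω → ℝ}
    (hg : Measurable[KMF f kw kv] g) {i} (hi : i ∉ KSet kw kv) : IndepFun g (f i) P := by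
  rw [IndepFun_iff_Indep]
  have h := indep_biSup_compl (fun j => measurable_iff_comap_le.1 (hfm j))
    ((iIndepFun_iff_iIndep _ _ _).1 hindep) (KSet kw kv)
  refine indep_of_indep_of_le_right
    (indep_of_indep_of_le_left h (measurable_iff_comap_le.1 hg)) ?_
  exact le_biSup (fun n => MeasurableSpace.comap (f n) Real.measurableSpace)
    (by exact hi : i ∈ (KSet kw kv)ᶜ)

end Filtration

/-- For the scalar linear Gaussian system `x_{k+1} = a x_k + w_k`, `y_k = c x_k + v_k`
with the Kalman filter, the innovations sequence `ε_k = y_k - c x̂_{k|k-1}` is white: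
for `j ≠ k`, `E[ε_j ε_k] = 0`. -/
theorem stmt_6 {Ω : Type*} [MeasurableSpace Ω] (P : Measure Ω) [IsProbabilityMeasure P]
    (a c : ℝ) (q r S0 : ℝ≥0) (xhat0 : ℝ)
    (x w v y : ℕ → Ω → ℝ) (xhat : ℕ → Ω → ℝ) (Sp : ℕ → ℝ) (L : ℕ → ℝ)
    (hmeas : ∀ k, Measurable (x k) ∧ Measurable (w k) ∧ Measurable (v k))
    (hdyn : ∀ k, ∀ ω, x (k + 1) ω = a * x k ω + w k ω)
    (hout : ∀ k, ∀ ω, y k ω = c * x k ω + v k ω)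
    (hw : ∀ k, Measure.map (w k) P = ProbabilityTheory.gaussianReal 0 q)
    (hv : ∀ k, Measure.map (v k) P = ProbabilityTheory.gaussianReal 0 r)
    (hx0 : Measure.map (x 0) P = ProbabilityTheory.gaussianReal xhat0 S0)
    (hindep : ProbabilityTheory.iIndepFun
      (Sum.elim w (Sum.elim v (fun _ : Unit => x 0))) P)
    (hxhat0 : xhat 0 = fun _ => xhat0) (hS0 : Sp 0 = S0)
    (hL : ∀ k, L k = Sp k * c / (c ^ 2 * Sp k + r))
    (hxhat : ∀ k, ∀ ω, xhat (k + 1) ω =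
      a * (xhat k ω + L k * (y k ω - c * xhat k ω)))
    (hSp : ∀ k, Sp (k + 1) = a ^ 2 * ((1 - L k * c) * Sp k) + q) :
    ∀ j k, j ≠ k →
      (∫ ω, (y j ω - c * xhat j ω) * (y k ω - c * xhat k ω) ∂P) = 0 := by
  have hxm : ∀ k, Measurable (x k) := fun k => (hmeas k).1
  have hwm : ∀ k, Measurable (w k) := fun k => (hmeas k).2.1
  have hvm : ∀ k, Measurable (v k) := fun k => (hmeas k).2.2
  set F : (ℕ ⊕ (ℕ ⊕ Unit)) → Ω → ℝ := Sum.elim w (Sum.elim v (fun _ : Unit => x 0)) with hF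
  have hfm : ∀ i, Measurable (F i) := by
    rintro (n | n | u)
    · exact hwm n
    · exact hvm n
    · exact hxm 0
  -- error process
  set E : ℕ → Ω → ℝ := fun k ω => x k ω - xhat k ω with hE
  have herec : ∀ k ω, E (k + 1) ω =
      (a * (1 - L k * c)) * E k ω + (-(a * L k)) * v k ω + w k ω := by
    intro k ω
    simp only [hE, hdyn k ω, hxhat k ω, hout k ω]
    ring
  have hcomb : ∀ k, E (k + 1) =
      fun ω => (a * (1 - L k * c)) * E k ω + (-(a * L k)) * v k ω + w k ω :=
    fun k => funext (herec k)
  have heps : ∀ j ω, y j ω - c * xhat j ω = c * E j ω + v j ω := by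
    intro j ω
    simp only [hE, hout j ω]
    ring
  -- E 0 is Gaussian N(0, S0)
  have he0map : Measure.map (E 0) P = gaussianReal 0 S0 := by
    have h2 : E 0 = (fun z => z + (-xhat0)) ∘ (x 0) := by
      funext ω
      simp [hE, hxhat0, sub_eq_add_neg]
    rw [h2, ← Measure.map_map (measurable_add_const (-xhat0)) (hxm 0), hx0,
      gaussianReal_map_add_const]
    simp
  -- measurability of E w.r.t. the filtration
  have heMF : ∀ k, Measurable[KMF F k k] (E k) := by
    intro k
    induction k with
    | zero =>
      have h2 : E 0 = fun ω => F (Sum.inr (Sum.inr ())) ω - xhat0 := by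
        funext ω; simp [hE, hF, hxhat0]
      rw [h2]
      exact (KMF_meas (KSet_inrr ())).sub measurable_const
    | succ k ih =>
      rw [hcomb k]
      have h1 : Measurable[KMF F (k+1) (k+1)] (E k) :=
        ih.mono (KMF_mono (Nat.le_succ k) (Nat.le_succ k)) le_rfl
      have h2 : Measurable[KMF F (k+1) (k+1)] (v k) :=
        KMF_meas (f := F) (KSet_inrl.2 (Nat.lt_succ_self k))
      have h3 : Measurable[KMF F (k+1) (k+1)] (w k) :=
        KMF_meas (f := F) (KSet_inl.2 (Nat.lt_succ_self k))
      exact ((h1.const_mul _).add (h2.const_mul _)).add h3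
  have hem : ∀ k, Measurable (E k) := fun k => (heMF k).mono (KMF_le hfm k k) le_rfl
  -- moments of the noises
  have hv_mem : ∀ k, MemLp (v k) 2 P := fun k => aux_memlp (hvm k) (hv k)
  have hw_mem : ∀ k, MemLp (w k) 2 P := fun k => aux_memlp (hwm k) (hw k)
  have hv_mean : ∀ k, ∫ ω, v k ω ∂P = 0 := fun k => aux_mean (hvm k) (hv k)
  have hw_mean : ∀ k, ∫ ω, w k ω ∂P = 0 := fun k => aux_mean (hwm k) (hw k)
  have hv_sq : ∀ k, ∫ ω, v k ω ^ 2 ∂P = r := fun k => aux_sq (hvm k) (hv k)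
  have hw_sq : ∀ k, ∫ ω, w k ω ^ 2 ∂P = q := fun k => aux_sq (hwm k) (hw k)
  -- independence facts
  have hEv : ∀ k, IndepFun (E k) (v k) P := fun k =>
    KMF_indep (i := Sum.inr (Sum.inl k)) hfm hindep (heMF k) (by rw [KSet_inrl]; omega)
  have hEw : ∀ k, IndepFun (E k) (w k) P := fun k =>
    KMF_indep (i := Sum.inl k) hfm hindep (heMF k) (by rw [KSet_inl]; omega)
  have hvw : ∀ k, IndepFun (v k) (w k) P :=
    fun k => hindep.indepFun (show (Sum.inr (Sum.inl k) : ℕ ⊕ (ℕ ⊕ Unit)) ≠ Sum.inl k by simp)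
  -- the moment induction
  have hpack : ∀ k, MemLp (E k) 2 P ∧ (∫ ω, E k ω ∂P = 0) ∧ (∫ ω, E k ω ^ 2 ∂P = Sp k) := by
    intro k
    induction k with
    | zero =>
      exact ⟨aux_memlp (hem 0) he0map, aux_mean (hem 0) he0map,
        by rw [aux_sq (hem 0) he0map, hS0]⟩
    | succ k ih =>
      obtain ⟨hm, h0, h2⟩ := ih
      have hSnn : 0 ≤ Sp k := h2 ▸ integral_nonneg fun ω => sq_nonneg _
      have hkeyL : L k * (c ^ 2 * Sp k + r) = c * Sp k := aux_L r.coe_nonneg hSnn (hL k)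
      have hA : MemLp (fun ω => (a * (1 - L k * c)) * E k ω) 2 P := hm.const_mul _
      have hB : MemLp (fun ω => (-(a * L k)) * v k ω) 2 P := (hv_mem k).const_mul _
      have hC : MemLp (w k) 2 P := hw_mem k
      have hmem : MemLp (E (k+1)) 2 P := by
        rw [hcomb k]; exact (hA.add hB).add hC
      refine ⟨hmem, ?_, ?_⟩
      · rw [hcomb k, aux_add3 (hA.integrable one_le_two) (hB.integrable one_le_two)
          (hC.integrable one_le_two), integral_const_mul, integral_const_mul, h0,
          hv_mean k, hw_mean k]
        ring
      · rw [hcomb k]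
        have cAB : ∫ ω, ((a * (1 - L k * c)) * E k ω) * ((-(a * L k)) * v k ω) ∂P = 0 := by
          have hfe : (fun ω => ((a * (1 - L k * c)) * E k ω) * ((-(a * L k)) * v k ω))
              = fun ω => ((a * (1 - L k * c)) * (-(a * L k))) * (E k ω * v k ω) := by
            funext ω; ring
          rw [hfe, integral_const_mul,
            aux_indep_zero (hEv k) (hem k).aestronglyMeasurable
              (hvm k).aestronglyMeasurable (hv_mean k), mul_zero]
        have cAC : ∫ ω, ((a * (1 - L k * c)) * E k ω) * w k ω ∂P = 0 := by
          have hfe : (fun ω => ((a * (1 - L k * c)) * E k ω) * w k ω)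
              = fun ω => (a * (1 - L k * c)) * (E k ω * w k ω) := by
            funext ω; ring
          rw [hfe, integral_const_mul,
            aux_indep_zero (hEw k) (hem k).aestronglyMeasurable
              (hwm k).aestronglyMeasurable (hw_mean k), mul_zero]
        have cBC : ∫ ω, ((-(a * L k)) * v k ω) * w k ω ∂P = 0 := by
          have hfe : (fun ω => ((-(a * L k)) * v k ω) * w k ω)
              = fun ω => (-(a * L k)) * (v k ω * w k ω) := by
            funext ω; ring
          rw [hfe, integral_const_mul,
            aux_indep_zero (hvw k) (hvm k).aestronglyMeasurable
              (hwm k).aestronglyMeasurable (hw_mean k), mul_zero]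
        rw [aux_sq3 hA hB hC cAB cAC cBC]
        have sA : ∫ ω, ((a * (1 - L k * c)) * E k ω) ^ 2 ∂P
            = (a * (1 - L k * c)) ^ 2 * Sp k := by
          have hfe : (fun ω => ((a * (1 - L k * c)) * E k ω) ^ 2)
              = fun ω => (a * (1 - L k * c)) ^ 2 * (E k ω ^ 2) := by
            funext ω; ring
          rw [hfe, integral_const_mul, h2]
        have sB : ∫ ω, ((-(a * L k)) * v k ω) ^ 2 ∂P = (a * L k) ^ 2 * r := by
          have hfe : (fun ω => ((-(a * L k)) * v k ω) ^ 2)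
              = fun ω => (a * L k) ^ 2 * (v k ω ^ 2) := by
            funext ω; ring
          rw [hfe, integral_const_mul, hv_sq k]
        rw [sA, sB, hw_sq k, hSp k]
        linear_combination (a ^ 2 * L k) * hkeyL
  have hSnn : ∀ k, 0 ≤ Sp k := fun k => (hpack k).2.2 ▸ integral_nonneg fun ω => sq_nonneg _
  have hzero_mem : MemLp (fun _ : Ω => (0:ℝ)) 2 P := memLp_const 0
  -- the innovation
  have heps_mem : ∀ j, MemLp (fun ω => y j ω - c * xhat j ω) 2 P := by
    intro j
    have h2 : (fun ω => y j ω - c * xhat j ω)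
        = fun ω => c * E j ω + 1 * v j ω + 0 := by
      funext ω; rw [heps j ω]; ring
    rw [h2]
    exact (((hpack j).1.const_mul c).add ((hv_mem j).const_mul 1)).add hzero_mem
  have heps_meas : ∀ j, Measurable (fun ω => y j ω - c * xhat j ω) := by
    intro j
    have h2 : (fun ω => y j ω - c * xhat j ω) = fun ω => c * E j ω + v j ω :=
      funext fun ω => heps j ω
    rw [h2]
    exact ((hem j).const_mul c).add (hvm j)
  have hepsMF : ∀ j, Measurable[KMF F j (j+1)] (fun ω => y j ω - c * xhat j ω) := by
    intro j
    have h2 : (fun ω => y j ω - c * xhat j ω) = fun ω => c * E j ω + v j ω :=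
      funext fun ω => heps j ω
    rw [h2]
    have h1 : Measurable[KMF F j (j+1)] (E j) :=
      (heMF j).mono (KMF_mono le_rfl (Nat.le_succ j)) le_rfl
    have h3 : Measurable[KMF F j (j+1)] (v j) :=
      KMF_meas (f := F) (KSet_inrl.2 (Nat.lt_succ_self j))
    exact (h1.const_mul c).add h3
  have heps_v : ∀ j m, j < m → IndepFun (fun ω => y j ω - c * xhat j ω) (v m) P :=
    fun j m hm => KMF_indep (i := Sum.inr (Sum.inl m)) hfm hindep (hepsMF j)
      (by rw [KSet_inrl]; omega)
  have heps_w : ∀ j m, j ≤ m → IndepFun (fun ω => y j ω - c * xhat j ω) (w m) P :=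
    fun j m hm => KMF_indep (i := Sum.inl m) hfm hindep (hepsMF j)
      (by rw [KSet_inl]; omega)
  -- main orthogonality induction
  have hmulE : ∀ j d, ∫ ω, (y j ω - c * xhat j ω) * E (j + 1 + d) ω ∂P = 0 := by
    intro j d
    induction d with
    | zero =>
      have hSnnj := hSnn j
      have hkeyL : L j * (c ^ 2 * Sp j + r) = c * Sp j := aux_L r.coe_nonneg hSnnj (hL j)
      have h2 : (fun ω => (y j ω - c * xhat j ω) * E (j + 1 + 0) ω)
          = fun ω => (y j ω - c * xhat j ω) *
              ((a * (1 - L j * c)) * E j ω + (-(a * L j)) * v j ω + w j ω) := by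
        funext ω; rw [show j + 1 + 0 = j + 1 from rfl, herec j ω]
      rw [h2, aux_dot _ _ (heps_mem j) (hpack j).1 (hv_mem j) (hw_mem j)]
      -- the three inner products
      have T1 : ∫ ω, (y j ω - c * xhat j ω) * E j ω ∂P = c * Sp j := by
        rw [aux_comm]
        have h3 : (fun ω => E j ω * (y j ω - c * xhat j ω))
            = fun ω => E j ω * (c * E j ω + 1 * v j ω + 0) := by
          funext ω; rw [heps j ω]; ring
        rw [h3, aux_dot _ _ (hpack j).1 (hpack j).1 (hv_mem j) hzero_mem]
        have h4 : ∫ ω, E j ω * E j ω ∂P = Sp j := by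
          have h5 : (fun ω => E j ω * E j ω) = fun ω => E j ω ^ 2 := by
            funext ω; ring
          rw [h5, (hpack j).2.2]
        have h6 : ∫ ω, E j ω * v j ω ∂P = 0 :=
          aux_indep_zero (hEv j) (hem j).aestronglyMeasurable
            (hvm j).aestronglyMeasurable (hv_mean j)
        have h7 : ∫ ω, E j ω * (0:ℝ) ∂P = 0 := by simp
        rw [h4, h6, h7]
        ring
      have T2 : ∫ ω, (y j ω - c * xhat j ω) * v j ω ∂P = r := by
        rw [aux_comm]
        have h3 : (fun ω => v j ω * (y j ω - c * xhat j ω))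
            = fun ω => v j ω * (c * E j ω + 1 * v j ω + 0) := by
          funext ω; rw [heps j ω]; ring
        rw [h3, aux_dot _ _ (hv_mem j) (hpack j).1 (hv_mem j) hzero_mem]
        have h4 : ∫ ω, v j ω * v j ω ∂P = r := by
          have h5 : (fun ω => v j ω * v j ω) = fun ω => v j ω ^ 2 := by
            funext ω; ring
          rw [h5, hv_sq j]
        have h6 : ∫ ω, v j ω * E j ω ∂P = 0 :=
          aux_indep_zero (hEv j).symm (hvm j).aestronglyMeasurable
            (hem j).aestronglyMeasurable (hpack j).2.1
        have h7 : ∫ ω, v j ω * (0:ℝ) ∂P = 0 := by simp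
        rw [h4, h6, h7]
        ring
      have T3 : ∫ ω, (y j ω - c * xhat j ω) * w j ω ∂P = 0 :=
        aux_indep_zero (heps_w j j le_rfl) (heps_meas j).aestronglyMeasurable
          (hwm j).aestronglyMeasurable (hw_mean j)
      rw [T1, T2, T3]
      linear_combination (-a) * hkeyL
    | succ d ih =>
      have h2 : (fun ω => (y j ω - c * xhat j ω) * E (j + 1 + (d + 1)) ω)
          = fun ω => (y j ω - c * xhat j ω) *
              ((a * (1 - L (j+1+d) * c)) * E (j+1+d) ω
                + (-(a * L (j+1+d))) * v (j+1+d) ω + w (j+1+d) ω) := by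
        funext ω
        rw [show j + 1 + (d + 1) = (j + 1 + d) + 1 from rfl, herec (j+1+d) ω]
      rw [h2, aux_dot _ _ (heps_mem j) (hpack (j+1+d)).1 (hv_mem (j+1+d)) (hw_mem (j+1+d)),
        ih,
        aux_indep_zero (heps_v j (j+1+d) (by omega)) (heps_meas j).aestronglyMeasurable
          (hvm (j+1+d)).aestronglyMeasurable (hv_mean (j+1+d)),
        aux_indep_zero (heps_w j (j+1+d) (by omega)) (heps_meas j).aestronglyMeasurable
          (hwm (j+1+d)).aestronglyMeasurable (hw_mean (j+1+d))]
      ring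
  have hmain : ∀ j k, j < k → ∫ ω, (y j ω - c * xhat j ω) * (y k ω - c * xhat k ω) ∂P = 0 := by
    intro j k hjk
    obtain ⟨d, rfl⟩ : ∃ d, k = j + 1 + d := ⟨k - (j+1), by omega⟩
    have h2 : (fun ω => (y j ω - c * xhat j ω) * (y (j+1+d) ω - c * xhat (j+1+d) ω))
        = fun ω => (y j ω - c * xhat j ω) *
            (c * E (j+1+d) ω + 1 * v (j+1+d) ω + 0) := by
      funext ω; rw [heps (j+1+d) ω]; ring
    rw [h2, aux_dot _ _ (heps_mem j) (hpack (j+1+d)).1 (hv_mem (j+1+d)) hzero_mem,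
      hmulE j d,
      aux_indep_zero (heps_v j (j+1+d) (by omega)) (heps_meas j).aestronglyMeasurable
        (hvm (j+1+d)).aestronglyMeasurable (hv_mean (j+1+d))]
    simp
  intro j k hjk
  rcases lt_or_gt_of_ne hjk with h | h
  · exact hmain j k h
  · rw [aux_comm]
    exact hmain k j h
end

section
/- The variance of a standard normal random variable conditioned on lying in an interval (z_l, z_u] of positive probability is strictly less than 1 (the unconditional variance). -/
open MeasureTheory

/-- The variance of a standard normal conditioned on an interval `(z_l, z_u]` of
positive probability is strictly less than 1 (the unconditional variance):
`E[X² | X ∈ (z_l,z_u]] - (E[X | X ∈ (z_l,z_u]])² < 1`. -/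
theorem stmt_12 (φ : ℝ → ℝ) (α : ℝ → ℝ)
    (hφ : ∀ x, φ x = (Real.sqrt (2 * Real.pi))⁻¹ * Real.exp (-x ^ 2 / 2))
    (hα : ∀ z, α z = ∫ x in Set.Ioi z, φ x)
    (z_l z_u : ℝ) (hlt : z_l < z_u) (hpos : 0 < α z_l - α z_u) :
    (∫ x in z_l..z_u, x ^ 2 * φ x) / (α z_l - α z_u) -
      ((∫ x in z_l..z_u, x * φ x) / (α z_l - α z_u)) ^ 2 < 1 := by
  have hφeq : φ = fun x => (Real.sqrt (2 * Real.pi))⁻¹ * Real.exp (-x ^ 2 / 2) :=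
    funext hφ
  have hc : Continuous φ := by
    rw [hφeq]
    exact continuous_const.mul ((continuous_neg.comp (continuous_pow 2)).div_const 2).rexp
  have hφpos : ∀ x, 0 < φ x := by
    intro x
    rw [hφ]
    have : 0 < Real.sqrt (2 * Real.pi) := Real.sqrt_pos.2 (by positivity)
    positivity
  -- integrability of φ on ℝ
  have hint : Integrable φ := by
    rw [hφeq]
    have h := (integrable_exp_neg_mul_sq (by norm_num : (0:ℝ) < 1/2)).const_mul
      (Real.sqrt (2 * Real.pi))⁻¹
    convert h using 2 with x
    ring_nf
  -- M = ∫ φ on the interval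
  set M : ℝ := α z_l - α z_u with hM
  have hMint : M = ∫ x in z_l..z_u, φ x := by
    have hsplit : (∫ x in Set.Ioi z_l, φ x)
        = (∫ x in Set.Ioc z_l z_u, φ x) + ∫ x in Set.Ioi z_u, φ x := by
      rw [← setIntegral_union (Set.Ioc_disjoint_Ioi le_rfl) measurableSet_Ioi
        hint.integrableOn hint.integrableOn, Set.Ioc_union_Ioi_eq_Ioi hlt.le]
    rw [hM, hα, hα, hsplit, intervalIntegral.integral_of_le hlt.le]
    ring
  -- derivative of φ
  have hφd : ∀ x : ℝ, HasDerivAt φ (-(x * φ x)) x := by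
    intro x
    rw [hφeq]
    have h1 : HasDerivAt (fun y : ℝ => -y ^ 2 / 2) (-x) x := by
      have := ((hasDerivAt_pow 2 x).neg).div_const 2
      refine this.congr_deriv ?_
      ring
    have h2 := (h1.exp).const_mul (Real.sqrt (2 * Real.pi))⁻¹
    refine h2.congr_deriv ?_
    simp only
    ring
  -- ∫ x*φ = φ z_l - φ z_u
  have hI1 : (∫ x in z_l..z_u, x * φ x) = φ z_l - φ z_u := by
    have hd : ∀ x ∈ Set.uIcc z_l z_u, HasDerivAt (fun y => -φ y) (x * φ x) x := by
      intro x _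
      have := (hφd x).neg
      refine this.congr_deriv ?_
      ring
    rw [intervalIntegral.integral_eq_sub_of_hasDerivAt hd
      ((by fun_prop : Continuous fun x : ℝ => x * φ x).intervalIntegrable _ _)]
    ring
  -- ∫ (x²-1)*φ = z_l φ z_l - z_u φ z_u
  have hI2' : (∫ x in z_l..z_u, (x ^ 2 * φ x - φ x))
      = z_l * φ z_l - z_u * φ z_u := by
    have hd : ∀ x ∈ Set.uIcc z_l z_u,
        HasDerivAt (fun y => -(y * φ y)) (x ^ 2 * φ x - φ x) x := by
      intro x _
      have := ((hasDerivAt_id x).mul (hφd x)).neg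
      refine this.congr_deriv ?_
      simp only [id_eq]
      ring
    rw [intervalIntegral.integral_eq_sub_of_hasDerivAt hd
      ((((continuous_pow 2).mul hc).sub hc).intervalIntegrable _ _)]
    ring
  have hI2 : (∫ x in z_l..z_u, x ^ 2 * φ x)
      = M + (z_l * φ z_l - z_u * φ z_u) := by
    have := intervalIntegral.integral_sub (μ := volume)
      ((by fun_prop : Continuous fun x : ℝ => x ^ 2 * φ x).intervalIntegrable z_l z_u)
      (hc.intervalIntegrable z_l z_u)
    rw [this] at hI2'
    rw [hMint]
    linarith
  set B : ℝ := ∫ x in z_l..z_u, x * φ x with hB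
  -- mean strictly inside the interval: z_l * M < B < z_u * M
  have hlB : z_l * M < B := by
    have h1 : (0:ℝ) < ∫ x in z_l..z_u, (x - z_l) * φ x := by
      apply intervalIntegral.intervalIntegral_pos_of_pos_on
        ((by fun_prop : Continuous fun x : ℝ => (x - z_l) * φ x).intervalIntegrable _ _)
      · intro x hx
        exact mul_pos (by linarith [hx.1]) (hφpos x)
      · exact hlt
    have h2 : (∫ x in z_l..z_u, (x - z_l) * φ x)
        = B - z_l * M := by
      have : (∫ x in z_l..z_u, (x - z_l) * φ x)
          = (∫ x in z_l..z_u, x * φ x) - z_l * ∫ x in z_l..z_u, φ x := by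
        rw [← intervalIntegral.integral_const_mul, ← intervalIntegral.integral_sub
          ((by fun_prop : Continuous fun x : ℝ => x * φ x).intervalIntegrable _ _)
          ((by fun_prop : Continuous fun x : ℝ => z_l * φ x).intervalIntegrable _ _)]
        congr 1
        funext x
        ring
      rw [this, hMint]
    linarith
  have huB : B < z_u * M := by
    have h1 : (0:ℝ) < ∫ x in z_l..z_u, (z_u - x) * φ x := by
      apply intervalIntegral.intervalIntegral_pos_of_pos_on
        ((by fun_prop : Continuous fun x : ℝ => (z_u - x) * φ x).intervalIntegrable _ _)
      · intro x hx
        exact mul_pos (by linarith [hx.2]) (hφpos x)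
      · exact hlt
    have h2 : (∫ x in z_l..z_u, (z_u - x) * φ x)
        = z_u * M - B := by
      have : (∫ x in z_l..z_u, (z_u - x) * φ x)
          = z_u * (∫ x in z_l..z_u, φ x) - ∫ x in z_l..z_u, x * φ x := by
        rw [← intervalIntegral.integral_const_mul, ← intervalIntegral.integral_sub
          ((by fun_prop : Continuous fun x : ℝ => z_u * φ x).intervalIntegrable _ _)
          ((by fun_prop : Continuous fun x : ℝ => x * φ x).intervalIntegrable _ _)]
        congr 1
        funext x
        ring
      rw [this, hMint]
    linarith
  -- final algebra
  have hφl := hφpos z_l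
  have hφu := hφpos z_u
  rw [hI2, hI1] at *
  rw [div_pow, div_sub_div _ _ (ne_of_gt hpos) (by positivity),
    div_lt_one (by positivity)]
  nlinarith [mul_lt_mul_of_pos_right hlB hφl, mul_lt_mul_of_pos_right huB hφu]
end
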